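/- For every odd positive integer n, every invertible element d of Z/nZ, every a in Z/nZ, and every positive integer m ≡ 0 or -1 (mod n), the triangles DAT(a,d,-d,m), DAT(a,d,2d,m) and DAT(a,2d,d,m) are balanced in Z/nZ. -/

import Mathlib

def DAT (n : ℕ) (a d1 d2 : ZMod n) (m : ℕ) : Multiset (ZMod n) :=
  ((Finset.range m ×ˢ Finset.range m).filter (fun p => p.1 + p.2 < m)).val.map
    (fun p => a + p.1 • d1 + p.2 • d2)

def IsBalanced {n : ℕ} (M : Multiset (ZMod n)) : Prop :=
  ∀ x y : ZMod n, M.count x = M.count y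

open Finset

/-- Resolve `a % n` for `a < 3n` into a linear disjunction usable by `omega`. -/
lemma aux_mod3 (n a : ℕ) (hn : 0 < n) (h : a < 3 * n) :
    (a < n ∧ a % n = a) ∨ (n ≤ a ∧ a < 2 * n ∧ a % n = a - n) ∨
      (2 * n ≤ a ∧ a % n = a - 2 * n) := by
  rcases lt_or_ge a n with h1 | h1
  · exact Or.inl ⟨h1, Nat.mod_eq_of_lt h1⟩
  rcases lt_or_ge a (2 * n) with h2 | h2
  · refine Or.inr (Or.inl ⟨h1, h2, ?_⟩)
    rw [Nat.mod_eq_sub_mod h1, Nat.mod_eq_of_lt (by omega)]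
  · refine Or.inr (Or.inr ⟨h2, ?_⟩)
    rw [Nat.mod_eq_sub_mod h1, Nat.mod_eq_sub_mod (by omega), Nat.mod_eq_of_lt (by omega)]
    omega

/-- The core counting fact, natural-number version. -/
lemma aux_coreNat (n C : ℕ) (hodd : Odd n) (hC : C < n) :
    ((range n).filter (fun r => (C + 2 * r) % n ≤ r)).card = (n + 1) / 2 := by
  have hn : 0 < n := hodd.pos
  obtain ⟨k, hk⟩ := hodd
  rcases Nat.eq_zero_or_pos C with rfl | hC1
  · have hset : (range n).filter (fun r => (0 + 2 * r) % n ≤ r)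
        = insert 0 (Ico ((n + 1) / 2) n) := by
      ext r
      simp only [mem_filter, mem_range, mem_insert, mem_Ico]
      constructor
      · rintro ⟨hr, hcond⟩
        have := aux_mod3 n (0 + 2 * r) hn (by omega)
        omega
      · intro h
        have hr : r < n := by omega
        have := aux_mod3 n (0 + 2 * r) hn (by omega)
        omega
    rw [hset, card_insert_of_notMem (by simp only [mem_Ico]; omega), Nat.card_Ico]
    omega
  · have hset : (range n).filter (fun r => (C + 2 * r) % n ≤ r)
        = (Ico ((n - C + 1) / 2) (n - C + 1)) ∪ (Ico ((2 * n - C + 1) / 2) n) := by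
      ext r
      simp only [mem_filter, mem_range, mem_union, mem_Ico]
      by_cases hr : r < n
      · have := aux_mod3 n (C + 2 * r) hn (by omega)
        omega
      · omega
    have hdisj : Disjoint (Ico ((n - C + 1) / 2) (n - C + 1))
        (Ico ((2 * n - C + 1) / 2) n) := by
      rw [Finset.disjoint_left]
      intro x h1 h2
      simp only [mem_Ico] at h1 h2
      omega
    rw [hset, card_union_of_disjoint hdisj, Nat.card_Ico, Nat.card_Ico]
    omega

/-- Core fact in `ZMod` form, slope `2`. -/
lemma aux_coreZ (n : ℕ) (hodd : Odd n) (c : ZMod n) :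
    ((range n).filter (fun r : ℕ => (c + 2 * (r : ZMod n)).val ≤ r)).card = (n + 1) / 2 := by
  have hn : 0 < n := hodd.pos
  haveI : NeZero n := ⟨hn.ne'⟩
  have hval : ∀ r : ℕ, (c + 2 * (r : ZMod n)).val = (c.val + 2 * r) % n := by
    intro r
    have h1 : (c + 2 * (r : ZMod n)) = ((c.val + 2 * r : ℕ) : ZMod n) := by
      push_cast [ZMod.natCast_val, ZMod.cast_id]
      ring
    rw [h1, ZMod.val_natCast]
  simp only [hval]
  exact aux_coreNat n c.val hodd (ZMod.val_lt c)

lemma aux_val_eq_iff (n : ℕ) [NeZero n] (X : ZMod n) (u : ℕ) (hu : u < n) :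
    X.val = u ↔ X = (u : ZMod n) := by
  constructor
  · rintro rfl
    rw [ZMod.natCast_val, ZMod.cast_id]
  · rintro rfl
    exact ZMod.val_cast_of_lt hu

/-- Core fact in `ZMod` form, slope `2⁻¹`. -/
lemma aux_coreZ' (n : ℕ) (hodd : Odd n) (c : ZMod n) :
    ((range n).filter (fun r : ℕ => (c + (2 : ZMod n)⁻¹ * (r : ZMod n)).val ≤ r)).card
      = (n + 1) / 2 := by
  have hn : 0 < n := hodd.pos
  haveI : NeZero n := ⟨hn.ne'⟩
  have h2 : IsUnit (2 : ZMod n) := by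
    have h : ((2 : ℕ) : ZMod n) = (2 : ZMod n) := by push_cast; ring
    rw [← h, ZMod.isUnit_iff_coprime]
    exact Nat.coprime_two_left.2 hodd
  have h2inv : (2 : ZMod n) * (2 : ZMod n)⁻¹ = 1 := ZMod.mul_inv_of_unit _ h2
  have key1 : ∀ r : ℕ, r < n →
      ((-(2 * c)) + 2 * (((c + (2 : ZMod n)⁻¹ * (r : ZMod n)).val : ℕ) : ZMod n))
        = (r : ZMod n) := by
    intro r _
    rw [ZMod.natCast_val, ZMod.cast_id]
    linear_combination (r : ZMod n) * h2inv
  have key2 : ∀ u : ℕ, u < n →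
      (c + (2 : ZMod n)⁻¹ * ((((-(2 * c)) + 2 * (u : ZMod n)).val : ℕ) : ZMod n))
        = (u : ZMod n) := by
    intro u _
    rw [ZMod.natCast_val, ZMod.cast_id]
    linear_combination ((u : ZMod n) - c) * h2inv
  have hcard : ((range n).filter (fun r : ℕ => (c + (2 : ZMod n)⁻¹ * (r : ZMod n)).val ≤ r)).card
      = ((range n).filter (fun u : ℕ => u ≤ ((-(2 * c)) + 2 * (u : ZMod n)).val)).card := by
    apply Finset.card_nbij' (i := fun r : ℕ => (c + (2 : ZMod n)⁻¹ * (r : ZMod n)).val)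
      (j := fun u : ℕ => ((-(2 * c)) + 2 * (u : ZMod n)).val)
    · intro r hr
      simp only [coe_filter, mem_filter, mem_range, Set.mem_setOf_eq] at hr ⊢
      obtain ⟨hr1, hr2⟩ := hr
      refine ⟨ZMod.val_lt _, ?_⟩
      rw [key1 r hr1, ZMod.val_cast_of_lt hr1]
      exact hr2
    · intro u hu
      simp only [coe_filter, mem_filter, mem_range, Set.mem_setOf_eq] at hu ⊢
      obtain ⟨hu1, hu2⟩ := hu
      refine ⟨ZMod.val_lt _, ?_⟩
      rw [key2 u hu1, ZMod.val_cast_of_lt hu1]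
      exact hu2
    · intro r hr
      simp only [coe_filter, mem_filter, mem_range, Set.mem_setOf_eq] at hr
      dsimp only; rw [key1 r hr.1, ZMod.val_cast_of_lt hr.1]
    · intro u hu
      simp only [coe_filter, mem_filter, mem_range, Set.mem_setOf_eq] at hu
      dsimp only; rw [key2 u hu.1, ZMod.val_cast_of_lt hu.1]
  rw [hcard]
  set c' : ZMod n := -(2 * c) with hc'
  have hsplit := Finset.card_filter_add_card_filter_not
    (s := range n) (p := fun u : ℕ => u ≤ (c' + 2 * (u : ZMod n)).val)
  have hle := aux_coreZ n hodd c'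
  have hferm : ((range n).filter (fun u : ℕ => (c' + 2 * (u : ZMod n)).val ≤ u)).card
      = ((range n).filter (fun u : ℕ => ¬ u ≤ (c' + 2 * (u : ZMod n)).val)).card + 1 := by
    have hsetsplit : (range n).filter (fun u : ℕ => (c' + 2 * (u : ZMod n)).val ≤ u)
        = ((range n).filter (fun u : ℕ => ¬ u ≤ (c' + 2 * (u : ZMod n)).val))
          ∪ {(2 * c : ZMod n).val} := by
      ext u
      simp only [mem_filter, mem_range, mem_union, mem_singleton, not_le]
      constructor
      · rintro ⟨hu, hVle⟩
        rcases lt_or_eq_of_le hVle with hlt | heq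
        · exact Or.inl ⟨hu, hlt⟩
        · right
          have : (c' + 2 * (u : ZMod n)) = (u : ZMod n) :=
            (aux_val_eq_iff n _ u hu).1 heq
          have huz : (u : ZMod n) = 2 * c := by
            rw [hc'] at this
            linear_combination this
          rw [← huz, ZMod.val_cast_of_lt hu]
      · rintro (⟨hu, hlt⟩ | rfl)
        · exact ⟨hu, le_of_lt hlt⟩
        · refine ⟨ZMod.val_lt _, ?_⟩
          have : (c' + 2 * (((2 * c : ZMod n).val : ℕ) : ZMod n)) = (2 * c : ZMod n) := by
            rw [ZMod.natCast_val, ZMod.cast_id, hc']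
            ring
          rw [this]
    have hdisj2 : Disjoint ((range n).filter (fun u : ℕ => ¬ u ≤ (c' + 2 * (u : ZMod n)).val))
        ({(2 * c : ZMod n).val} : Finset ℕ) := by
      rw [Finset.disjoint_left]
      intro u h1 h2
      simp only [mem_filter, mem_range, not_le] at h1
      simp only [mem_singleton] at h2
      subst h2
      have : (c' + 2 * (((2 * c : ZMod n).val : ℕ) : ZMod n)) = (2 * c : ZMod n) := by
        rw [ZMod.natCast_val, ZMod.cast_id, hc']
        ring
      rw [this] at h1
      exact absurd h1.2 (lt_irrefl _)
    rw [hsetsplit, card_union_of_disjoint hdisj2, card_singleton]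
  have hrange : (range n).card = n := Finset.card_range n
  obtain ⟨k, hk⟩ := hodd
  omega

/-- Number of `j < M` with `j % n = t`. -/
lemma aux_rowcount (n t : ℕ) (hn : 0 < n) (ht : t < n) (M : ℕ) :
    ((range M).filter (fun j => j % n = t)).card = (M + (n - 1 - t)) / n := by
  induction M with
  | zero => simp [Nat.div_eq_of_lt (by omega : n - 1 - t < n)]
  | succ M ih =>
    have hdvd : n ∣ (M + (n - 1 - t) + 1) ↔ M % n = t := by
      rcases lt_or_ge M t with hMt | htM
      · constructor
        · intro h
          have h1 := Nat.le_of_dvd (by omega) h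
          omega
        · intro h
          have := Nat.mod_eq_of_lt (show M < n by omega)
          omega
      · have he : M + (n - 1 - t) + 1 = (M - t) + n := by omega
        rw [he]
        have h1 : n ∣ (M - t) + n ↔ n ∣ M - t := by
          exact Nat.dvd_add_self_right
        rw [h1, ← Nat.modEq_iff_dvd' htM]
        unfold Nat.ModEq
        rw [Nat.mod_eq_of_lt ht]
        exact ⟨fun h => h.symm, fun h => h.symm⟩
    rw [range_add_one, filter_insert]
    by_cases hM : M % n = t
    · rw [if_pos hM, card_insert_of_notMem (by simp), ih]
      have : M + 1 + (n - 1 - t) = (M + (n - 1 - t)) + 1 := by omega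
      rw [this, Nat.succ_div, if_pos (hdvd.2 hM)]
    · rw [if_neg hM, ih]
      have : M + 1 + (n - 1 - t) = (M + (n - 1 - t)) + 1 := by omega
      rw [this, Nat.succ_div, if_neg (fun h => hM (hdvd.1 h))]
      omega

/-- Sum of a function of `s % n` over a full period. -/
lemma aux_sum_period (n : ℕ) (f : ℕ → ℕ) (q : ℕ) :
    ∑ s ∈ range (n * q), f (s % n) = q * ∑ r ∈ range n, f r := by
  induction q with
  | zero => simp
  | succ q ih =>
    have h1 : n * (q + 1) = n * q + n := by ring
    rw [h1, Finset.sum_range_add, ih]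
    have h2 : ∑ s ∈ range n, f ((n * q + s) % n) = ∑ r ∈ range n, f r := by
      refine Finset.sum_congr rfl (fun s hs => ?_)
      rw [Nat.mul_add_mod, Nat.mod_eq_of_lt (mem_range.1 hs)]
    rw [h2]
    ring

/-- The count of `x` in a DAT triangle, as an explicit sum over rows. -/
lemma aux_DAT_count (n : ℕ) [NeZero n] (a d1 d2 x : ZMod n) (m : ℕ)
    (he : IsUnit (d2 - d1)) :
    (DAT n a d1 d2 m).count x
      = ∑ s ∈ range m,
          (s + n - ((d2 - d1)⁻¹ * (x - a) - ((d2 - d1)⁻¹ * d1) * (s : ZMod n)).val) / n := by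
  have hn : 0 < n := Nat.pos_of_ne_zero (NeZero.ne n)
  have hinv : (d2 - d1)⁻¹ * (d2 - d1) = 1 := ZMod.inv_mul_of_unit _ he
  rw [DAT, Multiset.count_map]
  have h0 : Multiset.card
      ((((range m ×ˢ range m).filter (fun p : ℕ × ℕ => p.1 + p.2 < m)).val).filter
        (fun p => x = a + p.1 • d1 + p.2 • d2))
      = ((range m ×ˢ range m).filter
          (fun p : ℕ × ℕ => (p.1 + p.2 < m) ∧ x = a + p.1 • d1 + p.2 • d2)).card := by
    rw [← Finset.filter_filter]
    rfl
  rw [h0]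
  have h1 : ((range m ×ˢ range m).filter
        (fun p : ℕ × ℕ => (p.1 + p.2 < m) ∧ x = a + p.1 • d1 + p.2 • d2)).card
      = ((range m ×ˢ range m).filter
        (fun q : ℕ × ℕ => (q.2 ≤ q.1) ∧
          (q.2 : ZMod n) * (d2 - d1) = x - a - (q.1 : ZMod n) * d1)).card := by
    apply Finset.card_nbij' (i := fun p => (p.1 + p.2, p.2)) (j := fun q => (q.1 - q.2, q.2))
    · rintro ⟨i, j⟩ hp
      simp only [coe_filter, Set.mem_setOf_eq, mem_filter, mem_product, mem_range, nsmul_eq_mul] at hp ⊢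
      obtain ⟨⟨hi, hj⟩, hlt, hx⟩ := hp
      refine ⟨⟨by omega, by omega⟩, by omega, ?_⟩
      push_cast
      linear_combination -hx
    · rintro ⟨s, j⟩ hq
      simp only [coe_filter, Set.mem_setOf_eq, mem_filter, mem_product, mem_range, nsmul_eq_mul] at hq ⊢
      obtain ⟨⟨hs, hj⟩, hle, hx⟩ := hq
      refine ⟨⟨by omega, by omega⟩, by omega, ?_⟩
      have hcast : ((s - j : ℕ) : ZMod n) = (s : ZMod n) - (j : ZMod n) := by
        rw [Nat.cast_sub hle]
      rw [hcast]
      linear_combination -hx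
    · rintro ⟨i, j⟩ hp
      dsimp only
      simp only [Prod.mk.injEq]
      exact ⟨by omega, trivial⟩
    · rintro ⟨s, j⟩ hq
      simp only [coe_filter, Set.mem_setOf_eq, mem_filter, mem_product, mem_range] at hq
      dsimp only
      simp only [Prod.mk.injEq]
      exact ⟨by omega, trivial⟩
  rw [h1]
  have h2 : ((range m ×ˢ range m).filter
        (fun q : ℕ × ℕ => (q.2 ≤ q.1) ∧
          (q.2 : ZMod n) * (d2 - d1) = x - a - (q.1 : ZMod n) * d1)).card
      = ∑ s ∈ range m, ((range (s + 1)).filter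
          (fun j : ℕ => (j : ZMod n) * (d2 - d1) = x - a - (s : ZMod n) * d1)).card := by
    rw [Finset.card_filter, Finset.sum_product]
    refine Finset.sum_congr rfl (fun s hs => ?_)
    rw [Finset.card_filter]
    have hsub : range (s + 1) ⊆ range m :=
      Finset.range_subset_range.2 (by simp only [mem_range] at hs; omega)
    rw [← Finset.sum_subset hsub (fun j _ hj2 => by
      rw [if_neg]
      rintro ⟨hjs, -⟩
      exact hj2 (mem_range.2 (by omega)))]
    refine Finset.sum_congr rfl (fun j hj => ?_)
    have hjs : j ≤ s := by simp only [mem_range, Nat.lt_succ_iff] at hj; exact hj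
    simp [hjs]
  rw [h2]
  refine Finset.sum_congr rfl (fun s hs => ?_)
  set τ : ZMod n := (d2 - d1)⁻¹ * (x - a) - ((d2 - d1)⁻¹ * d1) * (s : ZMod n) with hτ
  have hτlt : τ.val < n := ZMod.val_lt τ
  have hcond : ∀ j : ℕ, ((j : ZMod n) * (d2 - d1) = x - a - (s : ZMod n) * d1)
      ↔ (j % n = τ.val) := by
    intro j
    constructor
    · intro h
      have hj : (j : ZMod n) = τ := by
        rw [hτ]
        linear_combination (d2 - d1)⁻¹ * h - (j : ZMod n) * hinv
      rw [← hj, ZMod.val_natCast]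
    · intro h
      have hj : (j : ZMod n) = τ := by
        rw [← ZMod.natCast_mod j n, h, ZMod.natCast_val, ZMod.cast_id]
      rw [hτ] at hj
      linear_combination (d2 - d1) * hj + (x - a - d1 * (s : ZMod n)) * hinv
  rw [Finset.filter_congr (fun j _ => by rw [hcond j]),
    aux_rowcount n τ.val hn hτlt (s + 1)]
  congr 1
  omega

/-- Periodic sums with equal one-period data agree. -/
lemma aux_sum_const_mod (n m : ℕ) (hn : 0 < n) (hmod : n ∣ m ∨ n ∣ (m + 1)) (f f' : ℕ → ℕ)
    (hf : ∑ r ∈ range n, f r = ∑ r ∈ range n, f' r)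
    (hlast : f (n - 1) = f' (n - 1)) :
    ∑ s ∈ range m, f (s % n) = ∑ s ∈ range m, f' (s % n) := by
  rcases hmod with ⟨q, rfl⟩ | ⟨q0, hq⟩
  · rw [aux_sum_period, aux_sum_period, hf]
  · rcases q0 with - | q
    · rw [Nat.mul_zero] at hq
      omega
    · have hstep1 := Finset.sum_range_succ (fun s => f (s % n)) m
      have hstep2 := Finset.sum_range_succ (fun s => f' (s % n)) m
      rw [hq] at hstep1 hstep2
      rw [aux_sum_period n f (q + 1), hf] at hstep1
      rw [aux_sum_period n f' (q + 1)] at hstep2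
      have hmn : m % n = n - 1 := by
        have hq' : m + 1 = n * q + n := by rw [hq]; ring
        have hm' : m = n * q + (n - 1) := by omega
        rw [hm', Nat.mul_add_mod, Nat.mod_eq_of_lt (by omega)]
      rw [hmn] at hstep1 hstep2
      rw [hlast] at hstep1
      omega

/-- The row sum is independent of the offset `c`. -/
lemma aux_sum_const (n : ℕ) (hodd : Odd n) (g : ZMod n)
    (hN : ∀ c : ZMod n, ((range n).filter
        (fun r : ℕ => (c - g * (r : ZMod n)).val ≤ r)).card = (n + 1) / 2)
    (m : ℕ) (hmod : n ∣ m ∨ n ∣ (m + 1)) (c c' : ZMod n) :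
    ∑ s ∈ range m, (s + n - (c - g * (s : ZMod n)).val) / n
      = ∑ s ∈ range m, (s + n - (c' - g * (s : ZMod n)).val) / n := by
  have hn : 0 < n := hodd.pos
  haveI : NeZero n := ⟨hn.ne'⟩
  have key : ∀ b : ZMod n, ∑ s ∈ range m, (s + n - (b - g * (s : ZMod n)).val) / n
      = (∑ s ∈ range m, s / n)
        + ∑ s ∈ range m, (s % n + n - (b - g * ((s % n : ℕ) : ZMod n)).val) / n := by
    intro b
    rw [← Finset.sum_add_distrib]
    refine Finset.sum_congr rfl (fun s _ => ?_)
    have hcast : ((s : ℕ) : ZMod n) = ((s % n : ℕ) : ZMod n) := (ZMod.natCast_mod s n).symm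
    rw [hcast]
    have hT : (b - g * ((s % n : ℕ) : ZMod n)).val < n := ZMod.val_lt _
    have hsn : s % n < n := Nat.mod_lt _ hn
    have hdm := Nat.div_add_mod s n
    set T := (b - g * ((s % n : ℕ) : ZMod n)).val with hTdef
    have hrw : s + n - T = n * (s / n) + (s % n + n - T) := by omega
    rw [hrw, Nat.mul_add_div hn]
  have hind : ∀ b : ZMod n, ∀ r : ℕ, r < n →
      (r + n - (b - g * (r : ZMod n)).val) / n
        = if (b - g * (r : ZMod n)).val ≤ r then 1 else 0 := by
    intro b r hr
    have hT : (b - g * (r : ZMod n)).val < n := ZMod.val_lt _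
    by_cases h : (b - g * (r : ZMod n)).val ≤ r
    · rw [if_pos h]
      exact Nat.div_eq_of_lt_le (by omega) (by omega)
    · rw [if_neg h]
      exact Nat.div_eq_of_lt (by omega)
  have hfull : ∀ b : ZMod n,
      ∑ r ∈ range n, (r + n - (b - g * (r : ZMod n)).val) / n = (n + 1) / 2 := by
    intro b
    rw [Finset.sum_congr rfl (fun r hr => hind b r (mem_range.1 hr)),
      ← Finset.card_filter]
    exact hN b
  have hlast : ∀ b : ZMod n,
      ((n - 1) + n - (b - g * ((n - 1 : ℕ) : ZMod n)).val) / n = 1 := by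
    intro b
    rw [hind b (n - 1) (by omega)]
    rw [if_pos (by have := ZMod.val_lt (b - g * ((n - 1 : ℕ) : ZMod n)); omega)]
  rw [key c, key c']
  refine congrArg (fun z => (∑ s ∈ range m, s / n) + z) ?_
  exact aux_sum_const_mod n m hn hmod
    (fun r => (r + n - (c - g * (r : ZMod n)).val) / n)
    (fun r => (r + n - (c' - g * (r : ZMod n)).val) / n)
    ((hfull c).trans (hfull c').symm)
    ((hlast c).trans (hlast c').symm)

/-- Balancedness from the core counting property. -/
lemma aux_bal (n : ℕ) (hodd : Odd n) (a d1 d2 : ZMod n) (m : ℕ)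
    (hmod : n ∣ m ∨ n ∣ (m + 1)) (he : IsUnit (d2 - d1))
    (hN : ∀ c : ZMod n, ((range n).filter
        (fun r : ℕ => (c - ((d2 - d1)⁻¹ * d1) * (r : ZMod n)).val ≤ r)).card = (n + 1) / 2) :
    IsBalanced (DAT n a d1 d2 m) := by
  haveI : NeZero n := ⟨hodd.pos.ne'⟩
  intro x y
  rw [aux_DAT_count n a d1 d2 x m he, aux_DAT_count n a d1 d2 y m he]
  exact aux_sum_const n hodd ((d2 - d1)⁻¹ * d1) hN m hmod _ _

/-- The DAT triangle is symmetric in its two directions. -/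
lemma aux_DAT_swap (n : ℕ) (a d1 d2 : ZMod n) (m : ℕ) :
    DAT n a d1 d2 m = DAT n a d2 d1 m := by
  unfold DAT
  have hS : ((range m ×ˢ range m).filter (fun p : ℕ × ℕ => p.1 + p.2 < m)).map
      ⟨Prod.swap, Prod.swap_injective⟩
      = ((range m ×ˢ range m).filter (fun p : ℕ × ℕ => p.1 + p.2 < m)) := by
    ext p
    simp only [Finset.mem_map, Finset.mem_filter, Finset.mem_product, Finset.mem_range,
      Function.Embedding.coeFn_mk]
    constructor
    · rintro ⟨q, ⟨⟨h1, h2⟩, h3⟩, rfl⟩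
      refine ⟨⟨h2, h1⟩, ?_⟩
      simp only [Prod.fst_swap, Prod.snd_swap]
      omega
    · rintro ⟨⟨h1, h2⟩, h3⟩
      exact ⟨p.swap, ⟨⟨h2, h1⟩, by simp only [Prod.fst_swap, Prod.snd_swap]; omega⟩,
        Prod.swap_swap p⟩
  have hval : ((range m ×ˢ range m).filter (fun p : ℕ × ℕ => p.1 + p.2 < m)).val
      = Multiset.map Prod.swap
          ((range m ×ˢ range m).filter (fun p : ℕ × ℕ => p.1 + p.2 < m)).val := by
    conv_lhs => rw [← hS]
    rw [Finset.map_val]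
    rfl
  conv_lhs => rw [hval]
  rw [Multiset.map_map]
  refine Multiset.map_congr rfl (fun p _ => ?_)
  simp only [Function.comp_apply, Prod.fst_swap, Prod.snd_swap]
  exact add_right_comm a (p.2 • d1) (p.1 • d2)

lemma aux_inv_eq (n : ℕ) (e y z : ZMod n) (he : IsUnit e) (h : e * y = z) :
    e⁻¹ * z = y := by
  rw [← h, ← mul_assoc, ZMod.inv_mul_of_unit e he, one_mul]

theorem stmt3 (n : ℕ) (hn : Odd n) (d : ZMod n) (hd : IsUnit d) (a : ZMod n)
    (m : ℕ) (hm : 0 < m) (hmod : n ∣ m ∨ n ∣ (m + 1)) :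
    IsBalanced (DAT n a d (-d) m) ∧ IsBalanced (DAT n a d (2 * d) m) ∧
      IsBalanced (DAT n a (2 * d) d m) := by
  have hn0 : 0 < n := hn.pos
  haveI : NeZero n := ⟨hn0.ne'⟩
  have h2 : IsUnit (2 : ZMod n) := by
    have h : ((2 : ℕ) : ZMod n) = (2 : ZMod n) := by push_cast; ring
    rw [← h, ZMod.isUnit_iff_coprime]
    exact Nat.coprime_two_left.2 hn
  have h2inv : (2 : ZMod n) * (2 : ZMod n)⁻¹ = 1 := ZMod.mul_inv_of_unit _ h2
  -- the (2d, d) triangle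
  have he2 : IsUnit (d - 2 * d) := by
    have h : d - 2 * d = -d := by ring
    rw [h]; exact hd.neg
  have hg2 : (d - 2 * d)⁻¹ * (2 * d) = -2 :=
    aux_inv_eq n _ _ _ he2 (by ring)
  have hbal2 : IsBalanced (DAT n a (2 * d) d m) := by
    apply aux_bal n hn a (2 * d) d m hmod he2
    intro c
    have hpred : ∀ r : ℕ, (c - ((d - 2 * d)⁻¹ * (2 * d)) * (r : ZMod n))
        = c + 2 * (r : ZMod n) := by
      intro r; rw [hg2]; ring
    simp only [hpred]
    exact aux_coreZ n hn c
  -- the (d, -d) triangle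
  have he1 : IsUnit (-d - d) := by
    have h : -d - d = -(2 * d) := by ring
    rw [h]; exact (h2.mul hd).neg
  have hg1 : (-d - d)⁻¹ * d = -(2 : ZMod n)⁻¹ :=
    aux_inv_eq n _ _ _ he1 (by linear_combination d * h2inv)
  have hbal1 : IsBalanced (DAT n a d (-d) m) := by
    apply aux_bal n hn a d (-d) m hmod he1
    intro c
    have hpred : ∀ r : ℕ, (c - ((-d - d)⁻¹ * d) * (r : ZMod n))
        = c + (2 : ZMod n)⁻¹ * (r : ZMod n) := by
      intro r; rw [hg1]; ring
    simp only [hpred]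
    exact aux_coreZ' n hn c
  exact ⟨hbal1, by rw [aux_DAT_swap]; exact hbal2, hbal2⟩
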